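/- Let ω ∈ [0, π/2). For every nonzero complex number λ with |arg λ| ≤ ω and every complex number w with Re w ≥ 0, one has |w + λ| ≥ cos(ω) · max(|w|, |λ|). -/

import Mathlib

set_option maxHeartbeats 1000000


open Real Complex

/-- Pure real-arithmetic core of the sector bound. -/
lemma sector_add_lower_bound_aux (s a b c d r : ℝ) (ha : 0 ≤ a) (hc0 : 0 ≤ c)
    (hs : 0 ≤ s) (hs1 : s ^ 2 ≤ 1)
    (hcr : (1 - s ^ 2) * r ^ 2 ≤ c ^ 2) (hd2 : d ^ 2 ≤ s ^ 2 * r ^ 2) :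
    (1 - s ^ 2) * (a ^ 2 + b ^ 2) ≤ (a + c) ^ 2 + (b + d) ^ 2 := by
  rcases hs.eq_or_lt with h0 | hs
  · obtain rfl : s = 0 := h0.symm
    have hd0 : d ^ 2 ≤ 0 := by nlinarith [hd2]
    have hd0' : d = 0 := sq_eq_zero_iff.mp (le_antisymm hd0 (sq_nonneg d))
    subst hd0'
    nlinarith [mul_nonneg ha hc0, sq_nonneg a, sq_nonneg b]
  · have h5 : (1 - s ^ 2) * d ^ 2 ≤ s ^ 2 * c ^ 2 := by
      nlinarith [mul_le_mul_of_nonneg_left hd2 (sub_nonneg.mpr hs1),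
        mul_le_mul_of_nonneg_left hcr (mul_pos hs hs).le]
    nlinarith [sq_nonneg (s ^ 2 * b + d), sq_nonneg (s ^ 2 * a),
      mul_nonneg (mul_nonneg (mul_pos hs hs).le ha) hc0, mul_pos hs hs, h5]

/-- For `ω ∈ [0, π/2)`, every nonzero `λ` with `|arg λ| ≤ ω` and every `w` with
`Re w ≥ 0`, one has `|w + λ| ≥ cos ω · max (|w|, |λ|)`. -/
theorem sector_add_lower_bound
    (ω : ℝ) (hω0 : 0 ≤ ω) (hωlt : ω < π / 2)
    (lam : ℂ) (hlam : lam ≠ 0) (harg : |Complex.arg lam| ≤ ω)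
    (w : ℂ) (hw : 0 ≤ w.re) :
    Real.cos ω * max (‖w‖) (‖lam‖) ≤ ‖w + lam‖ := by
  have hpi := Real.pi_pos
  obtain ⟨hargl, hargu⟩ := abs_le.mp harg
  have hr : 0 < ‖lam‖ := norm_pos_iff.mpr hlam
  have hco : 0 < Real.cos ω := Real.cos_pos_of_mem_Ioo ⟨by linarith, hωlt⟩
  have hs0 : 0 ≤ Real.sin ω := Real.sin_nonneg_of_nonneg_of_le_pi hω0 (by linarith)
  have hcarg : lam.re = ‖lam‖ * Real.cos (Complex.arg lam) := by
    rw [Complex.cos_arg hlam]; field_simp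
  have hdarg : lam.im = ‖lam‖ * Real.sin (Complex.arg lam) := by
    rw [Complex.sin_arg]; field_simp
  have hcosle : Real.cos ω ≤ Real.cos (Complex.arg lam) := by
    rw [← Real.cos_abs (Complex.arg lam)]
    exact Real.cos_le_cos_of_nonneg_of_le_pi (abs_nonneg _) (by linarith) harg
  have hc : Real.cos ω * ‖lam‖ ≤ lam.re := by rw [hcarg]; nlinarith
  have hc0 : 0 ≤ lam.re := le_trans (by positivity) hc
  have hsu : Real.sin (Complex.arg lam) ≤ Real.sin ω :=
    Real.sin_le_sin_of_le_of_le_pi_div_two (by linarith) hωlt.le hargu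
  have hsl : -Real.sin ω ≤ Real.sin (Complex.arg lam) := by
    rw [← Real.sin_neg]
    exact Real.sin_le_sin_of_le_of_le_pi_div_two (by linarith) (by linarith) hargl
  have hsq : Real.sin lam.arg ^ 2 ≤ Real.sin ω ^ 2 := sq_le_sq' hsl hsu
  have hd2 : lam.im ^ 2 ≤ Real.sin ω ^ 2 * ‖lam‖ ^ 2 := by
    rw [hdarg]
    nlinarith [mul_le_mul_of_nonneg_left hsq (sq_nonneg (‖lam‖))]
  have habs2 : (‖w + lam‖) ^ 2 = (w.re + lam.re) ^ 2 + (w.im + lam.im) ^ 2 := by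
    rw [Complex.sq_norm, Complex.normSq_apply, Complex.add_re, Complex.add_im]; ring
  have hw2 : (‖w‖) ^ 2 = w.re ^ 2 + w.im ^ 2 := by
    rw [Complex.sq_norm, Complex.normSq_apply]; ring
  have hpy : Real.sin ω ^ 2 + Real.cos ω ^ 2 = 1 := Real.sin_sq_add_cos_sq ω
  have hco2 : Real.cos ω ^ 2 = 1 - Real.sin ω ^ 2 := by linarith
  have hs1 : Real.sin ω ^ 2 ≤ 1 := by nlinarith [sq_nonneg (Real.cos ω)]
  have hcr : Real.cos ω ^ 2 * ‖lam‖ ^ 2 ≤ lam.re ^ 2 := by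
    have h1 : Real.cos ω * ‖lam‖ * (Real.cos ω * ‖lam‖) ≤ lam.re * lam.re :=
      mul_self_le_mul_self (by positivity) hc
    nlinarith [h1]
  have hcr' : (1 - Real.sin ω ^ 2) * ‖lam‖ ^ 2 ≤ lam.re ^ 2 := by
    rw [← hco2]; exact hcr
  have key2 : (Real.cos ω * ‖w‖) ^ 2 ≤ (‖w + lam‖) ^ 2 := by
    rw [habs2, mul_pow, hw2, hco2]
    exact sector_add_lower_bound_aux (Real.sin ω) w.re w.im lam.re lam.im
      (‖lam‖) hw hc0 hs0 hs1 hcr' hd2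
  have key1 : (Real.cos ω * ‖lam‖) ^ 2 ≤ (‖w + lam‖) ^ 2 := by
    rw [habs2]
    have e2 : lam.re ^ 2 ≤ (w.re + lam.re) ^ 2 := by
      nlinarith [mul_nonneg hw hc0, sq_nonneg w.re]
    nlinarith [sq_nonneg (w.im + lam.im), hcr, e2]
  have habspos : 0 ≤ ‖w + lam‖ := norm_nonneg _
  rcases le_total (‖w‖) (‖lam‖) with h | h
  · rw [max_eq_right h]
    nlinarith [key1, mul_nonneg hco.le hr.le]
  · rw [max_eq_left h]
    nlinarith [key2, mul_nonneg hco.le (norm_nonneg w)]
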